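/- Let k ≥ 3, i ∈ {2, ..., k-1}, and T = [k] \ {i}, regarded as a tile in ℤ/kℤ. For 1 ≤ j ≤ d, let c_{j,d} ∈ (ℤ/kℤ)^d be the point with j-th coordinate equal to k-1 and all other coordinates 0, and let C_d = {c_{j,d} : 1 ≤ j ≤ d}. If S ⊂ C_d satisfies |S| ≡ 1 (mod k-1) and |S| ≤ d - log_k(d), then (ℤ/kℤ)^d \ S is T-tilable. -/

import Mathlib

def IsCopy {G : Type*} [AddCommGroup G] {d : ℕ} (T : Set G)
    (S : Set (Fin d → G)) : Prop :=
  ∃ (j : Fin d) (y : Fin d → G),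
    S = {z | ∃ t ∈ T, z = Function.update y j (y j + t)}

def Tilable {G : Type*} [AddCommGroup G] {d : ℕ} (T : Set G)
    (X : Set (Fin d → G)) : Prop :=
  ∃ P : Set (Set (Fin d → G)),
    (∀ S ∈ P, IsCopy T S) ∧ P.PairwiseDisjoint id ∧ ⋃₀ P = X

/-- The `j`-th corner of `(ℤ/kℤ)^d`: `k-1` in coordinate `j`, `0` elsewhere. -/
def corner (k d : ℕ) (j : Fin d) : Fin d → ZMod k :=
  Function.update (0 : Fin d → ZMod k) j ((k - 1 : ℕ) : ZMod k)

namespace RC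


variable {k d : ℕ}

def tile (j : Fin d) (y : Fin d → ZMod k) (w : ZMod k) : Set (Fin d → ZMod k) :=
  {z | (∀ l, l ≠ j → z l = y l) ∧ z j ≠ w}

def box (A : Finset (Fin d)) (p : Fin d → ZMod k) : Set (Fin d → ZMod k) :=
  {z | ∀ l, l ∉ A → z l = p l}

def pbox (A : Finset (Fin d)) (p : Fin d → ZMod k) (j : Fin d) (w : ZMod k) :
    Set (Fin d → ZMod k) :=
  {z | (∀ l, l ∉ A → l ≠ j → z l = p l) ∧ z j ≠ w}

def cor (p : Fin d → ZMod k) (t : Fin d) : Fin d → ZMod k :=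
  Function.update p t (p t - 1)

def cors (C : Finset (Fin d)) (p : Fin d → ZMod k) : Set (Fin d → ZMod k) :=
  {z | ∃ t ∈ C, z = cor p t}

variable {T : Set (ZMod k)}

theorem tilable_congr {X Y : Set (Fin d → ZMod k)} (h : X = Y) (hX : Tilable T X) :
    Tilable T Y := h ▸ hX

theorem tilable_empty : Tilable T (∅ : Set (Fin d → ZMod k)) :=
  ⟨∅, by simp, by simp [Set.PairwiseDisjoint], by simp⟩

theorem tilable_iUnion {ι : Type} (f : ι → Set (Fin d → ZMod k))
    (hf : ∀ a, Tilable T (f a)) (hdisj : Pairwise (Function.onFun Disjoint f)) :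
    Tilable T (⋃ a, f a) := by
  choose P hP1 hP2 hP3 using hf
  have hsub : ∀ a S, S ∈ P a → S ⊆ f a := by
    intro a S hS
    rw [← hP3 a]
    exact Set.subset_sUnion_of_mem hS
  refine ⟨⋃ a, P a, ?_, ?_, ?_⟩
  · intro S hS
    rcases Set.mem_iUnion.1 hS with ⟨a, ha⟩
    exact hP1 a S ha
  · intro S1 hS1 S2 hS2 hne
    rcases Set.mem_iUnion.1 hS1 with ⟨a1, ha1⟩
    rcases Set.mem_iUnion.1 hS2 with ⟨a2, ha2⟩
    by_cases hE : a1 = a2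
    · subst hE
      exact hP2 a1 ha1 ha2 hne
    · exact Disjoint.mono (hsub a1 S1 ha1) (hsub a2 S2 ha2) (hdisj hE)
  · rw [Set.sUnion_iUnion]
    exact Set.iUnion_congr hP3

theorem tilable_union {X Y : Set (Fin d → ZMod k)} (hX : Tilable T X) (hY : Tilable T Y)
    (h : Disjoint X Y) : Tilable T (X ∪ Y) := by
  have hXY : X ∪ Y = ⋃ (b : Bool), (if b then X else Y) := by
    ext z
    simp only [Set.mem_union, Set.mem_iUnion]
    constructor
    · rintro (hz | hz)
      · exact ⟨true, by simpa⟩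
      · exact ⟨false, by simpa⟩
    · rintro ⟨b, hb⟩
      cases b
      · right; simpa using hb
      · left; simpa using hb
  rw [hXY]
  refine tilable_iUnion _ (by intro a; cases a <;> simpa) ?_
  intro a b hab
  cases a <;> cases b <;> simp_all [Function.onFun]
  all_goals first | exact h | exact h.symm

theorem tilable_tile (hT : ∀ (j : Fin d) y w, IsCopy T (tile j y w)) (j : Fin d) (y w) :
    Tilable T (tile j y w) :=
  ⟨{tile j y w}, by simpa using hT j y w, Set.pairwiseDisjoint_singleton _ _,
    Set.sUnion_singleton _⟩

theorem tilable_pbox (hT : ∀ (j : Fin d) y w, IsCopy T (tile j y w))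
    (A : Finset (Fin d)) (p : Fin d → ZMod k) (j : Fin d) (w : ZMod k) (hj : j ∉ A) :
    Tilable T (pbox A p j w) := by
  induction A using Finset.induction generalizing p with
  | empty =>
    have : pbox (∅ : Finset (Fin d)) p j w = tile j p w := by
      ext z; simp [pbox, tile]
    rw [this]
    exact tilable_tile hT j p w
  | @insert a A' ha IH =>
    have haj : a ≠ j := by rintro rfl; exact hj (Finset.mem_insert_self a A')
    have hjA' : j ∉ A' := fun h => hj (Finset.mem_insert_of_mem h)
    have hsplit : pbox (insert a A') p j w
        = ⋃ v : ZMod k, pbox A' (Function.update p a v) j w := by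
      ext z
      simp only [Set.mem_iUnion]
      constructor
      · rintro ⟨h1, h2⟩
        refine ⟨z a, ⟨?_, h2⟩⟩
        intro l hl hlj
        by_cases hla : l = a
        · subst hla; rw [Function.update_self]
        · rw [Function.update_of_ne hla]
          exact h1 l (by simp [hla, hl]) hlj
      · rintro ⟨v, h1, h2⟩
        refine ⟨?_, h2⟩
        intro l hl hlj
        have hla : l ≠ a := fun h => hl (h ▸ Finset.mem_insert_self a A')
        have := h1 l (fun h => hl (Finset.mem_insert_of_mem h)) hlj
        rwa [Function.update_of_ne hla] at this
    rw [hsplit]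
    refine tilable_iUnion _ (fun v => IH (Function.update p a v) hjA') ?_
    intro v v' hvv'
    have key : ∀ v : ZMod k, ∀ z ∈ pbox A' (Function.update p a v) j w, z a = v := by
      intro v z hz
      have := hz.1 a ha haj
      rwa [Function.update_self] at this
    refine Set.disjoint_left.2 (fun z hz hz' => hvv' ?_)
    rw [← key v z hz, ← key v' z hz']

theorem tilable_boxdiff (hT : ∀ (j : Fin d) y w, IsCopy T (tile j y w))
    (A B : Finset (Fin d)) (hBA : B ⊆ A) (p : Fin d → ZMod k) :
    Tilable T (box A p \ box B p) := by
  classical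
  have hsplit : box A p \ box B p
      = ⋃ j : {j // j ∈ A \ B},
          pbox (B ∪ (A \ B).filter (fun l => l < j.1)) p j.1 (p j.1) := by
    ext z
    simp only [Set.mem_iUnion, Set.mem_diff]
    constructor
    · rintro ⟨hzA, hzB⟩
      have : ∃ l, l ∉ B ∧ z l ≠ p l := by
        by_contra hcon
        push_neg at hcon
        exact hzB (fun l hl => hcon l hl)
      obtain ⟨l0, hl0B, hl0z⟩ := this
      set D := (A \ B).filter (fun l => z l ≠ p l) with hD
      have hl0A : l0 ∈ A := by
        by_contra hlA
        exact hl0z (hzA l0 hlA)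
      have hDne : D.Nonempty := ⟨l0, by simp [hD, hl0A, hl0B, hl0z]⟩
      refine ⟨⟨D.max' hDne, Finset.mem_of_mem_filter _ (D.max'_mem hDne)⟩, ?_, ?_⟩
      · intro l hl hlj
        by_contra hzl
        have hlA : l ∈ A := by
          by_contra hlA
          exact hzl (hzA l hlA)
        have hlB : l ∉ B := fun h => hl (Finset.mem_union_left _ h)
        have hlD : l ∈ D := by simp [hD, hlA, hlB, hzl]
        have : l < D.max' hDne := lt_of_le_of_ne (Finset.le_max' D l hlD) hlj
        exact hl (Finset.mem_union_right _ (by simp [Finset.mem_sdiff, hlA, hlB, this]))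
      · exact (Finset.mem_filter.1 (D.max'_mem hDne)).2
    · rintro ⟨⟨j, hj⟩, h1, h2⟩
      rw [Finset.mem_sdiff] at hj
      constructor
      · intro l hl
        refine h1 l ?_ (fun h => hl (h ▸ hj.1))
        intro hmem
        rcases Finset.mem_union.1 hmem with h | h
        · exact hl (hBA h)
        · exact hl (Finset.mem_sdiff.1 (Finset.mem_of_mem_filter _ h)).1
      · intro hbox
        exact h2 (hbox j hj.2)
  rw [hsplit]
  refine tilable_iUnion _ (fun j => tilable_pbox hT _ _ _ _ ?_) ?_
  · rcases Finset.mem_sdiff.1 j.2 with ⟨hjA, hjB⟩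
    intro hmem
    rcases Finset.mem_union.1 hmem with h | h
    · exact hjB h
    · simp at h
  · intro j1 j2 hne
    have key : ∀ (j j' : {j // j ∈ A \ B}), j.1 < j'.1 →
        Disjoint (pbox (B ∪ (A \ B).filter (fun l => l < j.1)) p j.1 (p j.1))
          (pbox (B ∪ (A \ B).filter (fun l => l < j'.1)) p j'.1 (p j'.1)) := by
      intro j j' hlt
      refine Set.disjoint_left.2 (fun z hz hz' => ?_)
      rcases Finset.mem_sdiff.1 j'.2 with ⟨hA', hB'⟩
      have := hz.1 j'.1 ?_ (fun h => absurd (h ▸ hlt) (lt_irrefl _))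
      · exact hz'.2 this
      · intro hmem
        rcases Finset.mem_union.1 hmem with h | h
        · exact hB' h
        · rcases Finset.mem_filter.1 h with ⟨_, hlt'⟩
          exact absurd (hlt.trans hlt') (lt_irrefl _)
    have hne' : j1.1 ≠ j2.1 := fun h => hne (Subtype.ext h)
    rcases lt_or_gt_of_ne hne' with h | h
    · exact key j1 j2 h
    · exact (key j2 j1 h).symm

theorem tilable_bouquet (hT : ∀ (j : Fin d) y w, IsCopy T (tile j y w)) {ι : Type}
    [Nonempty ι] :
    ∀ (n : ℕ) (A : Finset (Fin d)), A.card ≤ n → ∀ (D : ι → Finset (Fin d)),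
      (∀ a, D a ⊆ A) → Pairwise (Function.onFun Disjoint D) →
      ∀ p : Fin d → ZMod k, Tilable T (box A p \ ⋃ a, box (D a) p) := by
  have hbase : ∀ (A : Finset (Fin d)) (D : ι → Finset (Fin d)), (∀ a, D a = ∅) →
      ∀ p : Fin d → ZMod k, Tilable T (box A p \ ⋃ a, box (D a) p) := by
    intro A D hall p
    have h2 : (⋃ a, box (D a) p) = box (∅ : Finset (Fin d)) p := by
      have h1 : (fun a => box (D a) p) = fun _ => box (∅ : Finset (Fin d)) p := by
        funext a; rw [hall a]
      rw [h1, Set.iUnion_const]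
    rw [h2]
    exact tilable_boxdiff hT _ _ (Finset.empty_subset _) p
  intro n
  induction n with
  | zero =>
    intro A hcard D hDA hdisj p
    have hA : A = ∅ := Finset.card_eq_zero.1 (Nat.le_zero.1 hcard)
    subst hA
    exact hbase ∅ D (fun a => Finset.subset_empty.1 (hDA a)) p
  | succ n IH =>
    intro A hcard D hDA hdisj p
    by_cases hall : ∀ a, D a = ∅
    · exact hbase A D hall p
    · push_neg at hall
      obtain ⟨a0, ha0⟩ := hall
      obtain ⟨j, hj⟩ := ha0
      have hjA : j ∈ A := hDA a0 hj
      have hjDa : ∀ a, a ≠ a0 → j ∉ D a := by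
        intro a ha hmem
        exact (Finset.disjoint_left.1 (hdisj ha) hmem) hj
      classical
      set A' := A.erase j with hA'
      set D' : ZMod k → ι → Finset (Fin d) := fun v a =>
        if a = a0 then (D a0).erase j else (if v = p j then D a else ∅) with hD'
      have hD'a0 : ∀ v, D' v a0 = (D a0).erase j := by intro v; simp [hD']
      have hD'ne : ∀ v a, a ≠ a0 → v = p j → D' v a = D a := by
        intro v a ha hv; simp [hD', ha, hv]
      have hD'ne' : ∀ v a, a ≠ a0 → v ≠ p j → D' v a = ∅ := by
        intro v a ha hv; simp [hD', ha, hv]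
      have hsplit : box A p \ ⋃ a, box (D a) p
          = ⋃ v : ZMod k,
              (box A' (Function.update p j v) \ ⋃ a, box (D' v a) (Function.update p j v)) := by
        ext z
        simp only [Set.mem_iUnion, Set.mem_diff, not_exists]
        constructor
        · rintro ⟨hz1, hz2⟩
          refine ⟨z j, ⟨?_, ?_⟩⟩
          · intro l hl
            by_cases hlj : l = j
            · subst hlj; rw [Function.update_self]
            · rw [Function.update_of_ne hlj]
              exact hz1 l (fun h => hl (Finset.mem_erase.2 ⟨hlj, h⟩))
          · intro a hza
            by_cases haa : a = a0
            · subst haa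
              refine hz2 a ?_
              intro l hl
              have hlj : l ≠ j := fun h => hl (h ▸ hj)
              have hres := hza l (by rw [hD'a0]; exact fun h => hl (Finset.mem_of_mem_erase h))
              rwa [Function.update_of_ne hlj] at hres
            · by_cases hv : z j = p j
              · refine hz2 a ?_
                intro l hl
                by_cases hlj : l = j
                · subst hlj; exact hv
                · have hres := hza l (by rw [hD'ne _ a haa hv]; exact hl)
                  rwa [Function.update_of_ne hlj] at hres
              · refine hz2 a0 ?_
                intro l hl
                have hlj : l ≠ j := fun h => hl (h ▸ hj)
                have hres := hza l (by rw [hD'ne' _ a haa hv]; exact Finset.notMem_empty l)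
                rwa [Function.update_of_ne hlj] at hres
        · rintro ⟨v, hz1, hz2⟩
          have hzj : z j = v := by
            have hres := hz1 j (by simp [hA'])
            rwa [Function.update_self] at hres
          constructor
          · intro l hl
            have hlj : l ≠ j := fun h => hl (h ▸ hjA)
            have hres := hz1 l (by simp [hA', hlj, hl])
            rwa [Function.update_of_ne hlj] at hres
          · intro a hza
            by_cases haa : a = a0
            · subst haa
              refine hz2 a ?_
              intro l hl
              rw [hD'a0] at hl
              by_cases hlj : l = j
              · subst hlj; rw [Function.update_self]; exact hzj
              · rw [Function.update_of_ne hlj]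
                exact hza l (fun hmem => hl (Finset.mem_erase.2 ⟨hlj, hmem⟩))
            · have hvp : v = p j := by
                rw [← hzj]
                exact hza j (hjDa a haa)
              refine hz2 a ?_
              intro l hl
              rw [hD'ne _ a haa hvp] at hl
              by_cases hlj : l = j
              · subst hlj; rw [Function.update_self]; exact hzj
              · rw [Function.update_of_ne hlj]
                exact hza l hl
      rw [hsplit]
      have hcard' : A'.card ≤ n := by
        have h1 : A'.card = A.card - 1 := by rw [hA']; exact Finset.card_erase_of_mem hjA
        have h2 := Finset.card_pos.2 ⟨j, hjA⟩
        omega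
      refine tilable_iUnion _ (fun v => IH A' hcard' (D' v) ?_ ?_ _) ?_
      · intro a
        by_cases haa : a = a0
        · subst haa
          rw [hD'a0]
          exact Finset.erase_subset_erase j (hDA a)
        · by_cases hv : v = p j
          · rw [hD'ne _ a haa hv]
            intro l hl
            exact Finset.mem_erase.2 ⟨fun h => hjDa a haa (h ▸ hl), hDA a hl⟩
          · rw [hD'ne' _ a haa hv]
            exact Finset.empty_subset _
      · intro a b hab
        simp only [Function.onFun]
        by_cases haa : a = a0
        · subst haa
          have hbb : b ≠ a := fun h => hab h.symm
          rw [hD'a0]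
          by_cases hv : v = p j
          · rw [hD'ne _ b hbb hv]
            exact Finset.disjoint_of_subset_left (Finset.erase_subset _ _) (hdisj hab)
          · rw [hD'ne' _ b hbb hv]
            exact Finset.disjoint_empty_right _
        · by_cases hbb : b = a0
          · subst hbb
            rw [hD'a0]
            by_cases hv : v = p j
            · rw [hD'ne _ a haa hv]
              exact Finset.disjoint_of_subset_right (Finset.erase_subset _ _) (hdisj hab)
            · rw [hD'ne' _ a haa hv]
              exact Finset.disjoint_empty_left _
          · by_cases hv : v = p j
            · rw [hD'ne _ a haa hv, hD'ne _ b hbb hv]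
              exact hdisj hab
            · rw [hD'ne' _ a haa hv]
              exact Finset.disjoint_empty_left _
      · intro v v' hvv'
        have key : ∀ v : ZMod k, ∀ z ∈ (box A' (Function.update p j v)
            \ ⋃ a, box (D' v a) (Function.update p j v)), z j = v := by
          intro v z hz
          have hres := hz.1 j (by simp [hA'])
          rwa [Function.update_self] at hres
        refine Set.disjoint_left.2 (fun z hz hz' => hvv' ?_)
        rw [← key v z hz, ← key v' z hz']

theorem tilable_xgadget (hT : ∀ (j : Fin d) y w, IsCopy T (tile j y w)) (hk : 3 ≤ k)
    (A : Finset (Fin d)) (hA : A.card = k - 1) (p : Fin d → ZMod k) :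
    Tilable T (box A p \ ({p} ∪ cors A p)) := by
  classical
  haveI : NeZero k := ⟨by omega⟩
  have hone : (1 : ZMod k) ≠ 0 := by
    intro h
    have : ((1 : ℕ) : ZMod k) = 0 := by exact_mod_cast h
    rw [ZMod.natCast_eq_zero_iff] at this
    exact absurd (Nat.le_of_dvd one_pos this) (by omega)
  have hsub1 : ∀ x : ZMod k, x - 1 ≠ x := by
    intro x h
    exact hone (by linear_combination x - h)
  have hAne : A.Nonempty := Finset.card_pos.1 (by omega)
  obtain ⟨jn, hjn⟩ := hAne
  set A' := A.erase jn with hA'def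
  have hA'card : A'.card = k - 2 := by
    rw [hA'def, Finset.card_erase_of_mem hjn, hA]
    omega
  have hA'ne : A'.Nonempty := Finset.card_pos.1 (by omega)
  haveI : Nonempty {t // t ∈ A'} := ⟨⟨hA'ne.choose, hA'ne.choose_spec⟩⟩
  have hjnA' : jn ∉ A' := Finset.notMem_erase jn A
  have hmemA' : ∀ t ∈ A', t ∈ A ∧ t ≠ jn := by
    intro t ht
    exact ⟨Finset.mem_of_mem_erase ht, (Finset.mem_erase.1 ht).1⟩
  -- the bijection between punctured heights and base directions
  have hcards : Fintype.card {v : ZMod k // v ≠ p jn ∧ v ≠ p jn - 1}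
      = Fintype.card {t // t ∈ A'} := by
    rw [Fintype.card_coe]
    rw [Fintype.card_subtype]
    have hfil : (Finset.univ.filter (fun v : ZMod k => v ≠ p jn ∧ v ≠ p jn - 1))
        = Finset.univ \ {p jn, p jn - 1} := by
      ext v
      simp [Finset.mem_sdiff, not_or, and_comm]
    rw [hfil, Finset.card_sdiff_of_subset (Finset.subset_univ _), Finset.card_univ, ZMod.card,
      Finset.card_pair (fun h => hsub1 (p jn) h.symm), hA'card]
  set σ := Fintype.equivOfCardEq hcards with hσdef
  set q := Function.update p jn (p jn - 1) with hqdef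
  -- the five blocks
  set U1 : Set (Fin d → ZMod k) := ⋃ t : {t // t ∈ A'}, tile jn (cor p t.1) (p jn) with hU1
  set U2 : Set (Fin d → ZMod k) :=
    ⋃ tu : (t : {t // t ∈ A'}) × {u : ZMod k // u ≠ p t.1 ∧ u ≠ p t.1 - 1},
      tile jn (Function.update p tu.1.1 tu.2.1) (σ.symm tu.1).1 with hU2
  set U3 : Set (Fin d → ZMod k) :=
    ⋃ v : {v : ZMod k // v ≠ p jn ∧ v ≠ p jn - 1},
      tile (σ v).1 (Function.update p jn v.1) (p (σ v).1 - 1) with hU3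
  set U4 : Set (Fin d → ZMod k) :=
    ⋃ x : {x // x ∈ box A' p \ ⋃ t : {t // t ∈ A'}, box {t.1} p},
      tile jn x.1 (p jn - 1) with hU4
  set U5 : Set (Fin d → ZMod k) :=
    box A' q \ ⋃ t : {t // t ∈ A'}, box {t.1} q with hU5
  -- small helpers
  have hAmem : ∀ {l}, l ∈ A' → l ∈ A := fun {l} h => Finset.mem_of_mem_erase h
  have hAne' : ∀ {l}, l ∈ A' → l ≠ jn := fun {l} h => (Finset.mem_erase.1 h).1
  have hnotinA : ∀ {l}, l ∉ A → l ≠ jn := fun {l} hl h => hl (h ▸ hjn)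
  have hnotinA2 : ∀ {l}, l ∉ A → l ∉ A' := fun {l} hl h => hl (hAmem h)
  have hqjn : q jn = p jn - 1 := Function.update_self _ _ _
  have hqoff : ∀ l, l ≠ jn → q l = p l := fun l h => Function.update_of_ne h _ _
  have hcort : ∀ t, cor p t t = p t - 1 := fun t => Function.update_self _ _ _
  have hcoro : ∀ t l, l ≠ t → cor p t l = p l := fun t l h => Function.update_of_ne h _ _
  -- tilability of the blocks
  have hU1til : Tilable T U1 := by
    rw [hU1]
    refine tilable_iUnion _ (fun t => tilable_tile hT _ _ _) ?_
    intro t t' hne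
    refine Set.disjoint_left.2 (fun z hz hz' => ?_)
    have htt : t.1 ≠ t'.1 := fun h => hne (Subtype.ext h)
    have h1 : z t'.1 = p t'.1 := by
      rw [hz.1 t'.1 (hAne' t'.2), hcoro t.1 t'.1 (fun h => htt h.symm)]
    have h2 : z t'.1 = p t'.1 - 1 := by
      rw [hz'.1 t'.1 (hAne' t'.2), hcort]
    exact hsub1 _ (h2 ▸ h1)
  have hU2til : Tilable T U2 := by
    rw [hU2]
    refine tilable_iUnion _ (fun tu => tilable_tile hT _ _ _) ?_
    intro tu tu' hne
    refine Set.disjoint_left.2 (fun z hz hz' => ?_)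
    by_cases htt : tu.1.1 = tu'.1.1
    · have hteq : tu.1 = tu'.1 := Subtype.ext htt
      have h1 : z tu.1.1 = tu.2.1 := by
        rw [hz.1 tu.1.1 (hAne' tu.1.2), Function.update_self]
      have h2 : z tu'.1.1 = tu'.2.1 := by
        rw [hz'.1 tu'.1.1 (hAne' tu'.1.2), Function.update_self]
      apply hne
      obtain ⟨a1, b1⟩ := tu
      obtain ⟨a2, b2⟩ := tu'
      cases hteq
      simp only [Sigma.mk.inj_iff, heq_eq_eq, and_true, true_and]
      exact Subtype.ext (by rw [← h1, ← h2])
    · have h1 : z tu'.1.1 = p tu'.1.1 := by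
        rw [hz.1 tu'.1.1 (hAne' tu'.1.2), Function.update_of_ne (fun h => htt h.symm)]
      have h2 : z tu'.1.1 = tu'.2.1 := by
        rw [hz'.1 tu'.1.1 (hAne' tu'.1.2), Function.update_self]
      exact tu'.2.2.1 (by rw [← h2, h1])
  have hU3til : Tilable T U3 := by
    rw [hU3]
    refine tilable_iUnion _ (fun v => tilable_tile hT _ _ _) ?_
    intro v v' hne
    refine Set.disjoint_left.2 (fun z hz hz' => ?_)
    have h1 : z jn = v.1 := by
      rw [hz.1 jn (fun h => hAne' (σ v).2 h.symm), Function.update_self]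
    have h2 : z jn = v'.1 := by
      rw [hz'.1 jn (fun h => hAne' (σ v').2 h.symm), Function.update_self]
    exact hne (Subtype.ext (by rw [← h1, ← h2]))
  have hU4til : Tilable T U4 := by
    rw [hU4]
    refine tilable_iUnion _ (fun x => tilable_tile hT _ _ _) ?_
    intro x x' hne
    refine Set.disjoint_left.2 (fun z hz hz' => ?_)
    apply hne
    apply Subtype.ext
    funext l
    by_cases hlj : l = jn
    · rw [hlj, x.2.1 jn hjnA', x'.2.1 jn hjnA']
    · rw [← hz.1 l hlj, ← hz'.1 l hlj]
  have hU5til : Tilable T U5 := by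
    rw [hU5]
    refine tilable_bouquet hT (ι := {t // t ∈ A'}) A'.card A' le_rfl (fun t => {t.1}) ?_ ?_ q
    · intro t
      exact Finset.singleton_subset_iff.2 t.2
    · intro t t' hne
      exact Finset.disjoint_singleton.2 (fun h => hne (Subtype.ext h))
  -- one-diff property of removed points
  have honediff : ∀ w, w ∈ ({p} ∪ cors A p : Set (Fin d → ZMod k)) →
      ∀ l₁, l₁ ∈ A' → ∀ l₂, l₂ ∈ A' → l₁ ≠ l₂ → w l₁ ≠ p l₁ → w l₂ ≠ p l₂ → False := by
    rintro w (hw | hw) l₁ h₁ l₂ h₂ hne hd₁ hd₂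
    · rw [Set.mem_singleton_iff] at hw
      subst hw
      exact hd₁ rfl
    · obtain ⟨s, hs, rfl⟩ := hw
      by_cases h1s : l₁ = s
      · exact hd₂ (hcoro s l₂ (fun h => hne (h1s.trans h.symm)))
      · exact hd₁ (hcoro s l₁ h1s)
  -- big-diff property of U4 and U5 elements
  have hbig45 : ∀ z, (z ∈ U4 ∨ z ∈ U5) →
      ∃ l₁, l₁ ∈ A' ∧ ∃ l₂, l₂ ∈ A' ∧ l₁ ≠ l₂ ∧ z l₁ ≠ p l₁ ∧ z l₂ ≠ p l₂ := by
    intro z hz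
    have key : ∀ (r r0 : Fin d → ZMod k), (∀ l, l ∈ A' → r0 l = p l) →
        (∀ l, l ∉ A' → r l = r0 l) →
        (∀ t : {t // t ∈ A'}, ∃ l, l ≠ t.1 ∧ r l ≠ r0 l) →
        ∃ l₁, l₁ ∈ A' ∧ ∃ l₂, l₂ ∈ A' ∧ l₁ ≠ l₂ ∧ r l₁ ≠ p l₁ ∧ r l₂ ≠ p l₂ := by
      intro r r0 hbase hoff hwit
      obtain ⟨t0, ht0⟩ := hA'ne
      obtain ⟨l₁, hl₁t, hl₁⟩ := hwit ⟨t0, ht0⟩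
      have hl₁A : l₁ ∈ A' := by
        by_contra hcon
        exact hl₁ (hoff l₁ hcon)
      obtain ⟨l₂, hl₂t, hl₂⟩ := hwit ⟨l₁, hl₁A⟩
      have hl₂A : l₂ ∈ A' := by
        by_contra hcon
        exact hl₂ (hoff l₂ hcon)
      refine ⟨l₂, hl₂A, l₁, hl₁A, hl₂t, ?_, ?_⟩
      · rw [← hbase l₂ hl₂A]; exact hl₂
      · rw [← hbase l₁ hl₁A]; exact hl₁
    rcases hz with hz | hz
    · rw [hU4] at hz
      rcases Set.mem_iUnion.1 hz with ⟨x, hx⟩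
      have hxd := key x.1 p (fun l _ => rfl) (fun l hl => x.2.1 l hl) ?_
      · obtain ⟨l₁, h₁, l₂, h₂, hne, hd₁, hd₂⟩ := hxd
        refine ⟨l₁, h₁, l₂, h₂, hne, ?_, ?_⟩
        · rw [hx.1 l₁ (hAne' h₁)]; exact hd₁
        · rw [hx.1 l₂ (hAne' h₂)]; exact hd₂
      · intro t
        have hnb : x.1 ∉ box {t.1} p := fun hmem => x.2.2 (Set.mem_iUnion.2 ⟨t, hmem⟩)
        by_contra hcon
        push_neg at hcon
        exact hnb (fun l hl => hcon l (Finset.notMem_singleton.1 hl))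
    · rw [hU5] at hz
      have hxd := key z q (fun l hl => hqoff l (hAne' hl)) (fun l hl => hz.1 l hl) ?_
      · exact hxd
      · intro t
        have hnb : z ∉ box {t.1} q := fun hmem => hz.2 (Set.mem_iUnion.2 ⟨t, hmem⟩)
        by_contra hcon
        push_neg at hcon
        exact hnb (fun l hl => hcon l (Finset.notMem_singleton.1 hl))
  -- small-diff property of U1, U2, U3
  have hsmall : ∀ z, (z ∈ U1 ∨ z ∈ U2 ∨ z ∈ U3) →
      ∃ t, ∀ l, l ∈ A' → l ≠ t → z l = p l := by
    rintro z (hz | hz | hz)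
    · rw [hU1] at hz
      rcases Set.mem_iUnion.1 hz with ⟨t, ht⟩
      refine ⟨t.1, fun l hl hlt => ?_⟩
      rw [ht.1 l (hAne' hl), hcoro t.1 l hlt]
    · rw [hU2] at hz
      rcases Set.mem_iUnion.1 hz with ⟨tu, ht⟩
      refine ⟨tu.1.1, fun l hl hlt => ?_⟩
      rw [ht.1 l (hAne' hl), Function.update_of_ne hlt]
    · rw [hU3] at hz
      rcases Set.mem_iUnion.1 hz with ⟨v, ht⟩
      refine ⟨(σ v).1, fun l hl hlt => ?_⟩
      rw [ht.1 l hlt, Function.update_of_ne (hAne' hl)]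
  have hd_small_big : ∀ z, (z ∈ U1 ∨ z ∈ U2 ∨ z ∈ U3) → (z ∈ U4 ∨ z ∈ U5) → False := by
    intro z h1 h2
    obtain ⟨t, ht⟩ := hsmall z h1
    obtain ⟨l₁, h₁, l₂, h₂, hne, hd₁, hd₂⟩ := hbig45 z h2
    by_cases e1 : l₁ = t
    · exact hd₂ (ht l₂ h₂ (fun h => hne (e1.trans h.symm)))
    · exact hd₁ (ht l₁ h₁ e1)
  have hd12 : Disjoint U1 U2 := by
    refine Set.disjoint_left.2 (fun z hz hz' => ?_)
    rw [hU1] at hz; rw [hU2] at hz'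
    rcases Set.mem_iUnion.1 hz with ⟨t, ht⟩
    rcases Set.mem_iUnion.1 hz' with ⟨tu, htu⟩
    by_cases e : t.1 = tu.1.1
    · have v1 : z t.1 = p t.1 - 1 := by rw [ht.1 t.1 (hAne' t.2), hcort]
      have v2 : z tu.1.1 = tu.2.1 := by rw [htu.1 tu.1.1 (hAne' tu.1.2), Function.update_self]
      exact tu.2.2.2 (by rw [← v2, ← e, v1, e])
    · have v1 : z tu.1.1 = p tu.1.1 := by
        rw [ht.1 tu.1.1 (hAne' tu.1.2), hcoro t.1 tu.1.1 (fun h => e h.symm)]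
      have v2 : z tu.1.1 = tu.2.1 := by rw [htu.1 tu.1.1 (hAne' tu.1.2), Function.update_self]
      exact tu.2.2.1 (by rw [← v2, v1])
  have hd13 : Disjoint U1 U3 := by
    refine Set.disjoint_left.2 (fun z hz hz' => ?_)
    rw [hU1] at hz; rw [hU3] at hz'
    rcases Set.mem_iUnion.1 hz with ⟨t, ht⟩
    rcases Set.mem_iUnion.1 hz' with ⟨v, hv⟩
    by_cases e : t.1 = (σ v).1
    · have v1 : z t.1 = p t.1 - 1 := by rw [ht.1 t.1 (hAne' t.2), hcort]
      exact hv.2 (by rw [← e, v1, e])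
    · have v1 : z t.1 = p t.1 - 1 := by rw [ht.1 t.1 (hAne' t.2), hcort]
      have v2 : z t.1 = p t.1 := by
        rw [hv.1 t.1 e, Function.update_of_ne (hAne' t.2)]
      exact hsub1 (p t.1) (by rw [← v1, v2])
  have hd23 : Disjoint U2 U3 := by
    refine Set.disjoint_left.2 (fun z hz hz' => ?_)
    rw [hU2] at hz; rw [hU3] at hz'
    rcases Set.mem_iUnion.1 hz with ⟨tu, ht⟩
    rcases Set.mem_iUnion.1 hz' with ⟨v, hv⟩
    by_cases e : tu.1.1 = (σ v).1
    · have heq : tu.1 = σ v := Subtype.ext e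
      have v1 : z jn = v.1 := by
        rw [hv.1 jn (fun h => hAne' (σ v).2 h.symm), Function.update_self]
      apply ht.2
      rw [heq, Equiv.symm_apply_apply, v1]
    · have v1 : z tu.1.1 = tu.2.1 := by rw [ht.1 tu.1.1 (hAne' tu.1.2), Function.update_self]
      have v2 : z tu.1.1 = p tu.1.1 := by
        rw [hv.1 tu.1.1 e, Function.update_of_ne (hAne' tu.1.2)]
      exact tu.2.2.1 (by rw [← v1, v2])
  have hd45 : Disjoint U4 U5 := by
    refine Set.disjoint_left.2 (fun z hz hz' => ?_)
    rw [hU4] at hz; rw [hU5] at hz'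
    rcases Set.mem_iUnion.1 hz with ⟨x, hx⟩
    exact hx.2 (by rw [hz'.1 jn hjnA', hqjn])
  -- the main partition equality
  have hmain : box A p \ ({p} ∪ cors A p) = U1 ∪ (U2 ∪ (U3 ∪ (U4 ∪ U5))) := by
    ext z
    constructor
    · rintro ⟨hzbox, hzrem⟩
      have hznp : z ≠ p := fun h => hzrem (Or.inl h)
      have hzncor : ∀ s, s ∈ A → z ≠ cor p s := fun s hs h => hzrem (Or.inr ⟨s, hs, h⟩)
      have hoffA : ∀ l, l ∉ A' → l ≠ jn → z l = p l := by
        intro l hl hlj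
        exact hzbox l (fun hmem => hl (Finset.mem_erase.2 ⟨hlj, hmem⟩))
      by_cases hS0 : ∀ t ∈ A', z t = p t
      · have h1 : z jn ≠ p jn := by
          intro h
          apply hznp
          funext l
          by_cases hlj : l = jn
          · rw [hlj, h]
          · by_cases hlA : l ∈ A'
            · exact hS0 l hlA
            · exact hoffA l hlA hlj
        have h2 : z jn ≠ p jn - 1 := by
          intro h
          apply hzncor jn hjn
          funext l
          by_cases hlj : l = jn
          · rw [hlj, h, hcort]
          · rw [hcoro jn l hlj]
            by_cases hlA : l ∈ A'
            · exact hS0 l hlA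
            · exact hoffA l hlA hlj
        refine Or.inr (Or.inr (Or.inl ?_))
        rw [hU3]
        refine Set.mem_iUnion.2 ⟨⟨z jn, ⟨h1, h2⟩⟩, ⟨fun l hl => ?_, ?_⟩⟩
        · by_cases hlj : l = jn
          · rw [hlj, Function.update_self]
          · rw [Function.update_of_ne hlj]
            by_cases hlA : l ∈ A'
            · exact hS0 l hlA
            · exact hoffA l hlA hlj
        · rw [hS0 _ (σ ⟨z jn, ⟨h1, h2⟩⟩).2]
          exact fun h => hsub1 _ h.symm
      · push_neg at hS0
        obtain ⟨t1, ht1, ht1d⟩ := hS0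
        by_cases hS1 : ∀ l, l ∈ A' → l ≠ t1 → z l = p l
        · by_cases hcv : z t1 = p t1 - 1
          · have hjn1 : z jn ≠ p jn := by
              intro h
              apply hzncor t1 (hAmem ht1)
              funext l
              by_cases hlt : l = t1
              · rw [hlt, hcv, hcort]
              · rw [hcoro t1 l hlt]
                by_cases hlj : l = jn
                · rw [hlj, h]
                · by_cases hlA : l ∈ A'
                  · exact hS1 l hlA hlt
                  · exact hoffA l hlA hlj
            refine Or.inl ?_
            rw [hU1]
            refine Set.mem_iUnion.2 ⟨⟨t1, ht1⟩, ⟨fun l hl => ?_, hjn1⟩⟩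
            by_cases hlt : l = t1
            · rw [hlt, hcv, hcort]
            · rw [hcoro t1 l hlt]
              by_cases hlA : l ∈ A'
              · exact hS1 l hlA hlt
              · exact hoffA l hlA hl
          · by_cases hjn3 : z jn = (σ.symm ⟨t1, ht1⟩).1
            · refine Or.inr (Or.inr (Or.inl ?_))
              rw [hU3]
              refine Set.mem_iUnion.2 ⟨σ.symm ⟨t1, ht1⟩, ?_⟩
              have hst : σ (σ.symm ⟨t1, ht1⟩) = ⟨t1, ht1⟩ := Equiv.apply_symm_apply σ _
              rw [hst]
              refine ⟨fun l hl => ?_, hcv⟩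
              by_cases hlj : l = jn
              · rw [hlj, Function.update_self, hjn3]
              · rw [Function.update_of_ne hlj]
                by_cases hlA : l ∈ A'
                · exact hS1 l hlA hl
                · exact hoffA l hlA hlj
            · refine Or.inr (Or.inl ?_)
              rw [hU2]
              refine Set.mem_iUnion.2 ⟨⟨⟨t1, ht1⟩, ⟨z t1, ⟨ht1d, hcv⟩⟩⟩, ⟨fun l hl => ?_, hjn3⟩⟩
              by_cases hlt : l = t1
              · rw [hlt, Function.update_self]
              · rw [Function.update_of_ne hlt]
                by_cases hlA : l ∈ A'
                · exact hS1 l hlA hlt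
                · exact hoffA l hlA hl
        · push_neg at hS1
          obtain ⟨l2, hl2A, hl2t, hl2d⟩ := hS1
          by_cases hjq : z jn = p jn - 1
          · refine Or.inr (Or.inr (Or.inr (Or.inr ?_)))
            rw [hU5]
            refine ⟨fun l hl => ?_, fun hmem => ?_⟩
            · by_cases hlj : l = jn
              · rw [hlj, hjq, hqjn]
              · rw [hoffA l hl hlj, hqoff l hlj]
            · rcases Set.mem_iUnion.1 hmem with ⟨t, ht⟩
              by_cases e : t1 = t.1
              · refine hl2d ?_
                have := ht l2 (Finset.notMem_singleton.2 (fun h => hl2t (h.trans e.symm)))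
                rw [this, hqoff l2 (hAne' hl2A)]
              · refine ht1d ?_
                have := ht t1 (Finset.notMem_singleton.2 e)
                rw [this, hqoff t1 (hAne' ht1)]
          · refine Or.inr (Or.inr (Or.inr (Or.inl ?_)))
            rw [hU4]
            have hx : Function.update z jn (p jn) ∈
                box A' p \ ⋃ t : {t // t ∈ A'}, box {t.1} p := by
              refine ⟨fun l hl => ?_, fun hmem => ?_⟩
              · by_cases hlj : l = jn
                · rw [hlj, Function.update_self]
                · rw [Function.update_of_ne hlj]
                  exact hoffA l hl hlj
              · rcases Set.mem_iUnion.1 hmem with ⟨t, ht⟩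
                by_cases e : t1 = t.1
                · refine hl2d ?_
                  have := ht l2 (Finset.notMem_singleton.2 (fun h => hl2t (h.trans e.symm)))
                  rwa [Function.update_of_ne (hAne' hl2A)] at this
                · refine ht1d ?_
                  have := ht t1 (Finset.notMem_singleton.2 e)
                  rwa [Function.update_of_ne (hAne' ht1)] at this
            refine Set.mem_iUnion.2 ⟨⟨Function.update z jn (p jn), hx⟩,
              ⟨fun l hl => (Function.update_of_ne hl _ _).symm, hjq⟩⟩
    · intro hz
      have hz' := hz
      rcases hz with hz | hz | hz | hz | hz
      · rw [hU1] at hz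
        rcases Set.mem_iUnion.1 hz with ⟨t, ht⟩
        have htA : t.1 ∈ A := hAmem t.2
        have hvt : z t.1 = p t.1 - 1 := by rw [ht.1 t.1 (hAne' t.2), hcort]
        refine ⟨fun l hl => ?_, ?_⟩
        · rw [ht.1 l (hnotinA hl), hcoro t.1 l (fun h => hl (h ▸ htA))]
        · rintro (h | ⟨s, hs, hzc⟩)
          · rw [Set.mem_singleton_iff] at h
            rw [h] at hvt
            exact hsub1 _ hvt.symm
          · by_cases e : s = t.1
            · apply ht.2
              rw [hzc, hcoro s jn (fun h => hAne' t.2 (e ▸ h).symm)]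
            · rw [hzc, hcoro s t.1 (fun h => e h.symm)] at hvt
              exact hsub1 _ hvt.symm
      · have hzU2 := hz
        rw [hU2] at hz
        rcases Set.mem_iUnion.1 hz with ⟨tu, ht⟩
        have hvt : z tu.1.1 = tu.2.1 := by
          rw [ht.1 tu.1.1 (hAne' tu.1.2), Function.update_self]
        refine ⟨fun l hl => ?_, ?_⟩
        · rw [ht.1 l (hnotinA hl), Function.update_of_ne (fun h => hl (by rw [h]; exact hAmem tu.1.2))]
        · rintro (h | ⟨s, hs, hzc⟩)
          · rw [Set.mem_singleton_iff] at h
            rw [h] at hvt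
            exact tu.2.2.1 hvt.symm
          · by_cases e : s = tu.1.1
            · rw [hzc, e, hcort] at hvt
              exact tu.2.2.2 hvt.symm
            · rw [hzc, hcoro s tu.1.1 (fun h => e h.symm)] at hvt
              exact tu.2.2.1 hvt.symm
      · rw [hU3] at hz
        rcases Set.mem_iUnion.1 hz with ⟨v, hv⟩
        have hjnσ : jn ≠ (σ v).1 := fun h => hAne' (σ v).2 h.symm
        have hvt : z jn = v.1 := by rw [hv.1 jn hjnσ, Function.update_self]
        refine ⟨fun l hl => ?_, ?_⟩
        · rw [hv.1 l (fun h => hl (by rw [h]; exact hAmem (σ v).2)), Function.update_of_ne (hnotinA hl)]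
        · rintro (h | ⟨s, hs, hzc⟩)
          · rw [Set.mem_singleton_iff] at h
            rw [h] at hvt
            exact v.2.1 hvt.symm
          · by_cases e : s = jn
            · rw [hzc, e, hcort] at hvt
              exact v.2.2 hvt.symm
            · rw [hzc, hcoro s jn (fun h => e h.symm)] at hvt
              exact v.2.1 hvt.symm
      · have hzU4 := hz
        rw [hU4] at hz
        rcases Set.mem_iUnion.1 hz with ⟨x, hxt⟩
        refine ⟨fun l hl => ?_, fun hrem => ?_⟩
        · rw [hxt.1 l (hnotinA hl)]
          exact x.2.1 l (hnotinA2 hl)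
        · obtain ⟨l₁, h₁, l₂, h₂, hne, hd₁, hd₂⟩ := hbig45 z (Or.inl hzU4)
          exact honediff z hrem l₁ h₁ l₂ h₂ hne hd₁ hd₂
      · have hzU5 := hz
        rw [hU5] at hz
        refine ⟨fun l hl => ?_, fun hrem => ?_⟩
        · rw [hz.1 l (hnotinA2 hl), hqoff l (hnotinA hl)]
        · obtain ⟨l₁, h₁, l₂, h₂, hne, hd₁, hd₂⟩ := hbig45 z (Or.inr hzU5)
          exact honediff z hrem l₁ h₁ l₂ h₂ hne hd₁ hd₂
  rw [hmain]
  refine tilable_union hU1til (tilable_union hU2til (tilable_union hU3til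
    (tilable_union hU4til hU5til hd45) ?_) ?_) ?_
  · refine Set.disjoint_union_right.2 ⟨?_, ?_⟩
    · exact Set.disjoint_left.2 (fun z hz hz' => hd_small_big z (Or.inr (Or.inr hz)) (Or.inl hz'))
    · exact Set.disjoint_left.2 (fun z hz hz' => hd_small_big z (Or.inr (Or.inr hz)) (Or.inr hz'))
  · refine Set.disjoint_union_right.2 ⟨hd23, Set.disjoint_union_right.2 ⟨?_, ?_⟩⟩
    · exact Set.disjoint_left.2 (fun z hz hz' => hd_small_big z (Or.inr (Or.inl hz)) (Or.inl hz'))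
    · exact Set.disjoint_left.2 (fun z hz hz' => hd_small_big z (Or.inr (Or.inl hz)) (Or.inr hz'))
  · refine Set.disjoint_union_right.2 ⟨hd12, Set.disjoint_union_right.2 ⟨hd13,
      Set.disjoint_union_right.2 ⟨?_, ?_⟩⟩⟩
    · exact Set.disjoint_left.2 (fun z hz hz' => hd_small_big z (Or.inl hz) (Or.inl hz'))
    · exact Set.disjoint_left.2 (fun z hz hz' => hd_small_big z (Or.inl hz) (Or.inr hz'))



theorem sub_one_ne (hk : 3 ≤ k) : ∀ x : ZMod k, x - 1 ≠ x := by
  have hone : (1 : ZMod k) ≠ 0 := by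
    haveI : NeZero k := ⟨by omega⟩
    intro h
    have h2 : ((1 : ℕ) : ZMod k) = 0 := by exact_mod_cast h
    rw [ZMod.natCast_eq_zero_iff] at h2
    exact absurd (Nat.le_of_dvd one_pos h2) (by omega)
  intro x h
  exact hone (by linear_combination -h)

theorem tilable_corners_flats (hT : ∀ (j : Fin d) y w, IsCopy T (tile j y w)) (hk : 3 ≤ k) :
    ∀ (n : ℕ) (C : Finset (Fin d)), C.card = n →
      ∀ (A : Finset (Fin d)) (D : ℕ → Finset (Fin d)) (p : Fin d → ZMod k),
        C ⊆ A → (∀ i, D i ⊆ A) → (∀ i, Disjoint C (D i)) →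
        Pairwise (Function.onFun Disjoint D) → (k - 1) ∣ C.card →
        Tilable T (box A p \ (cors C p ∪ ⋃ i, box (D i) p)) := by
  intro n
  induction n using Nat.strong_induction_on with
  | _ n IH =>
    intro C hCn A D p hCA hDA hCD hDD hdvd
    by_cases hC : C = ∅
    · subst hC
      have hcors : cors (∅ : Finset (Fin d)) p = ∅ := by
        ext z; simp [cors]
      rw [hcors, Set.empty_union]
      exact tilable_bouquet hT A.card A le_rfl D hDA hDD p
    · have hCpos : 0 < C.card := Finset.card_pos.2 (Finset.nonempty_iff_ne_empty.2 hC)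
      have hCk : k - 1 ≤ C.card := Nat.le_of_dvd hCpos hdvd
      obtain ⟨γ, hγC, hγcard⟩ := Finset.exists_subset_card_eq hCk
      set C' := C \ γ with hC'
      set D' : ℕ → Finset (Fin d) := fun i => match i with
        | 0 => γ
        | i + 1 => D i with hD'
      have hγA : γ ⊆ A := hγC.trans hCA
      have hγD : ∀ i, Disjoint γ (D i) := fun i => (hCD i).mono_left hγC
      have hsplit : box A p \ (cors C p ∪ ⋃ i, box (D i) p)
          = (box γ p \ ({p} ∪ cors γ p)) ∪ (box A p \ (cors C' p ∪ ⋃ i, box (D' i) p)) := by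
        ext z
        simp only [Set.mem_diff, Set.mem_union, Set.mem_iUnion, not_or, not_exists]
        constructor
        · rintro ⟨hzA, hzc, hzf⟩
          by_cases hzγ : z ∈ box γ p
          · left
            refine ⟨hzγ, ?_, ?_⟩
            · intro h
              rw [Set.mem_singleton_iff] at h
              subst h
              exact hzf 0 (fun l _ => rfl)
            · rintro ⟨t, ht, hzt⟩
              exact hzc ⟨t, hγC ht, hzt⟩
          · right
            refine ⟨hzA, ?_, ?_⟩
            · rintro ⟨t, ht, hzt⟩
              exact hzc ⟨t, (Finset.mem_sdiff.1 ht).1, hzt⟩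
            · intro i
              match i with
              | 0 => exact hzγ
              | Nat.succ m => exact hzf m
        · rintro (⟨hzγ, hzp, hzc⟩ | ⟨hzA, hzc, hzf⟩)
          · have hzdiff : ∃ l ∈ γ, z l ≠ p l := by
              by_contra hcon
              push_neg at hcon
              apply hzp
              rw [Set.mem_singleton_iff]
              funext l
              by_cases hl : l ∈ γ
              · exact hcon l hl
              · exact hzγ l hl
            obtain ⟨l0, hl0γ, hl0⟩ := hzdiff
            refine ⟨fun l hl => hzγ l (fun h => hl (hγA h)), ?_, ?_⟩
            · rintro ⟨t, ht, hzt⟩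
              by_cases htγ : t ∈ γ
              · exact hzc ⟨t, htγ, hzt⟩
              · apply sub_one_ne hk (p t)
                have h1 : z t = p t := hzγ t htγ
                have h2 : z t = p t - 1 := by
                  rw [hzt]; exact Function.update_self _ _ _
                rw [← h2]; exact h1
            · intro i hmem
              have hl0D : l0 ∉ D i := Finset.disjoint_left.1 (hγD i) hl0γ
              exact hl0 (hmem l0 hl0D)
          · refine ⟨hzA, ?_, fun i => hzf (i + 1)⟩
            rintro ⟨t, ht, hzt⟩
            by_cases htγ : t ∈ γ
            · apply hzf 0
              intro l hl
              have hlγ : l ∉ γ := hl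
              rw [hzt]
              exact Function.update_of_ne (fun h => hlγ (by rw [h]; exact htγ)) _ _
            · exact hzc ⟨t, Finset.mem_sdiff.2 ⟨ht, htγ⟩, hzt⟩
      rw [hsplit]
      have hγcards : γ.card = k - 1 := hγcard
      refine tilable_union (tilable_xgadget hT hk γ hγcards p) (IH (C'.card) ?_ C' rfl A D' p
        ((Finset.sdiff_subset).trans hCA) ?_ ?_ ?_ ?_) ?_
      · have : C'.card = C.card - γ.card := by
          rw [hC']; exact Finset.card_sdiff_of_subset hγC
        omega
      · intro i
        match i with
        | 0 => exact hγA
        | Nat.succ m => exact hDA m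
      · intro i
        match i with
        | 0 => exact Finset.sdiff_disjoint
        | Nat.succ m => exact (hCD m).mono_left (Finset.sdiff_subset)
      · intro i j hij
        simp only [Function.onFun]
        match i, j with
        | 0, 0 => exact absurd rfl hij
        | 0, Nat.succ m => exact (hγD m)
        | Nat.succ m, 0 => exact (hγD m).symm
        | Nat.succ m, Nat.succ m' => exact hDD (by omega : m ≠ m')
      · have h3 : C'.card = C.card - (k - 1) := by
          rw [hC', Finset.card_sdiff_of_subset hγC, hγcards]
        rw [h3]
        exact Nat.dvd_sub hdvd dvd_rfl
      · refine Set.disjoint_left.2 (fun z hz hz' => ?_)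
        exact hz'.2 (Or.inr (Set.mem_iUnion.2 ⟨0, hz.1⟩))
theorem tilable_corners (hT : ∀ (j : Fin d) y w, IsCopy T (tile j y w)) (hk : 3 ≤ k)
    (A : Finset (Fin d)) (hAne : A.Nonempty) (hmod : (k - 1) ∣ (A.card - 1))
    (p : Fin d → ZMod k) : Tilable T (box A p \ cors A p) := by
  classical
  obtain ⟨j0, hj0⟩ := hAne
  have hcort : ∀ t, cor p t t = p t - 1 := fun t => Function.update_self _ _ _
  have hcoro : ∀ t l, l ≠ t → cor p t l = p l := fun t l h => Function.update_of_ne h _ _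
  set D : ℕ → Finset (Fin d) := fun i => match i with
    | 0 => {j0}
    | _ + 1 => ∅ with hD
  have hsplit : box A p \ cors A p
      = tile j0 p (p j0 - 1) ∪ (box A p \ (cors (A.erase j0) p ∪ ⋃ i, box (D i) p)) := by
    ext z
    simp only [Set.mem_diff, Set.mem_union, Set.mem_iUnion, not_or, not_exists]
    constructor
    · rintro ⟨hzA, hzc⟩
      by_cases hz0 : ∀ l, l ≠ j0 → z l = p l
      · left
        refine ⟨hz0, fun h => hzc ⟨j0, hj0, ?_⟩⟩
        funext l
        by_cases hl : l = j0
        · rw [hl, h, hcort j0]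
        · rw [hcoro j0 l hl]
          exact hz0 l hl
      · right
        push_neg at hz0
        obtain ⟨l0, hl0j, hl0⟩ := hz0
        refine ⟨hzA, ?_, ?_⟩
        · rintro ⟨t, ht, hzt⟩
          exact hzc ⟨t, Finset.mem_of_mem_erase ht, hzt⟩
        · intro i
          match i with
          | 0 =>
            intro hmem
            exact hl0 (hmem l0 (Finset.notMem_singleton.2 hl0j))
          | Nat.succ m =>
            intro hmem
            exact hl0 (hmem l0 (Finset.notMem_empty l0))
    · rintro (⟨hz1, hz2⟩ | ⟨hzA, hzc, hzf⟩)
      · refine ⟨fun l hl => hz1 l (fun h => hl (h ▸ hj0)), ?_⟩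
        rintro ⟨t, ht, hzt⟩
        by_cases e : t = j0
        · apply hz2
          rw [hzt, e, hcort j0]
        · apply sub_one_ne hk (p t)
          have h1 : z t = p t := hz1 t e
          have h2 : z t = p t - 1 := by rw [hzt, hcort t]
          rw [← h2]; exact h1
      · refine ⟨hzA, ?_⟩
        rintro ⟨t, ht, hzt⟩
        by_cases e : t = j0
        · apply hzf 0
          intro l hl
          have hl' : l ≠ j0 := Finset.notMem_singleton.1 hl
          rw [hzt]
          exact hcoro t l (fun h => hl' (h.trans e))
        · exact hzc ⟨t, Finset.mem_erase.2 ⟨e, ht⟩, hzt⟩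
  rw [hsplit]
  refine tilable_union (tilable_tile hT j0 p (p j0 - 1))
    (tilable_corners_flats hT hk (A.erase j0).card (A.erase j0) rfl A D p
      (Finset.erase_subset _ _) ?_ ?_ ?_ ?_) ?_
  · intro i
    match i with
    | 0 => exact Finset.singleton_subset_iff.2 hj0
    | Nat.succ m => exact Finset.empty_subset _
  · intro i
    match i with
    | 0 => exact Finset.disjoint_singleton_right.2 (Finset.notMem_erase j0 A)
    | Nat.succ m => exact Finset.disjoint_empty_right _
  · intro i j hij
    simp only [Function.onFun]
    match i, j with
    | 0, 0 => exact absurd rfl hij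
    | 0, Nat.succ m => exact Finset.disjoint_empty_right _
    | Nat.succ m, 0 => exact Finset.disjoint_empty_left _
    | Nat.succ m, Nat.succ m' => exact Finset.disjoint_empty_left _
  · rw [Finset.card_erase_of_mem hj0]
    exact hmod
  · refine Set.disjoint_left.2 (fun z hz hz' => ?_)
    apply hz'.2
    refine Or.inr (Set.mem_iUnion.2 ⟨0, ?_⟩)
    intro l hl
    exact hz.1 l (Finset.notMem_singleton.1 hl)

theorem isCopy_tiles {i : ℕ} (hk : 3 ≤ k) (hi₁ : 2 ≤ i) (hi₂ : i ≤ k - 1) (j : Fin d)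
    (y : Fin d → ZMod k) (w : ZMod k) :
    IsCopy ((fun n : ℕ => (n : ZMod k)) '' {n : ℕ | 1 ≤ n ∧ n ≤ k ∧ n ≠ i}) (tile j y w) := by
  haveI : NeZero k := ⟨by omega⟩
  have hTset : ((fun n : ℕ => (n : ZMod k)) '' {n : ℕ | 1 ≤ n ∧ n ≤ k ∧ n ≠ i})
      = {x : ZMod k | x ≠ (i : ZMod k)} := by
    ext x
    constructor
    · rintro ⟨n, ⟨hn1, hn2, hn3⟩, rfl⟩
      intro h
      rw [ZMod.natCast_eq_natCast_iff] at h
      have h1 : n % k = i % k := h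
      have h2 : i % k = i := Nat.mod_eq_of_lt (by omega)
      rcases Nat.lt_or_ge n k with hlt | hge
      · rw [Nat.mod_eq_of_lt hlt] at h1
        omega
      · have hnk : n = k := by omega
        subst hnk
        rw [Nat.mod_self] at h1
        omega
    · intro hx
      by_cases hx0 : x = 0
      · refine ⟨k, ⟨by omega, le_rfl, by omega⟩, ?_⟩
        show ((k : ℕ) : ZMod k) = x
        rw [ZMod.natCast_self, hx0]
      · refine ⟨x.val, ⟨?_, le_of_lt (ZMod.val_lt x), ?_⟩,
          (show ((x.val : ℕ) : ZMod k) = x from ZMod.natCast_rightInverse x)⟩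
        · have := (ZMod.val_eq_zero x).not.2 hx0
          omega
        · intro h
          apply hx
          rw [← ZMod.natCast_rightInverse x, h]
  rw [hTset]
  refine ⟨j, Function.update y j (w - (i : ZMod k)), ?_⟩
  have hyj : Function.update y j (w - (i : ZMod k)) j = w - (i : ZMod k) :=
    Function.update_self _ _ _
  ext z
  simp only [tile, Set.mem_setOf_eq]
  constructor
  · rintro ⟨h1, h2⟩
    refine ⟨z j - (w - (i : ZMod k)), ?_, ?_⟩
    · intro h
      apply h2
      linear_combination h
    · funext l
      by_cases hl : l = j
      · rw [hl, Function.update_self, hyj]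
        ring
      · rw [Function.update_of_ne hl, Function.update_of_ne hl]
        exact h1 l hl
  · rintro ⟨t, ht, rfl⟩
    constructor
    · intro l hl
      rw [Function.update_of_ne hl, Function.update_of_ne hl]
    · rw [Function.update_self, hyj]
      intro h
      apply ht
      linear_combination h


end RC

/-- if `S` is a set of corners of `(ℤ/kℤ)^d` with
`|S| ≡ 1 (mod k-1)` and `|S| ≤ d - log_k d`, then `(ℤ/kℤ)^d \ S` is
tilable by `T = [k] \ {i}`. -/
theorem removedCorners (k i : ℕ) (hk : 3 ≤ k) (hi₁ : 2 ≤ i) (hi₂ : i ≤ k - 1)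
    (d : ℕ) (hd : 1 ≤ d) (S : Finset (Fin d → ZMod k))
    (hSsub : ∀ s ∈ S, ∃ j : Fin d, s = corner k d j)
    (hmod : S.card % (k - 1) = 1 % (k - 1))
    (hsize : (S.card : ℝ) ≤ (d : ℝ) - Real.logb k d) :
    Tilable ((fun n : ℕ => (n : ZMod k)) '' {n : ℕ | 1 ≤ n ∧ n ≤ k ∧ n ≠ i})
      ({z : Fin d → ZMod k | z ∉ S}) := by
  classical
  haveI : NeZero k := ⟨by omega⟩
  have hT : ∀ (j : Fin d) (y : Fin d → ZMod k) (w : ZMod k),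
      IsCopy ((fun n : ℕ => (n : ZMod k)) '' {n : ℕ | 1 ≤ n ∧ n ≤ k ∧ n ≠ i}) (RC.tile j y w) :=
    fun j y w => RC.isCopy_tiles hk hi₁ hi₂ j y w
  have hone : ((k - 1 : ℕ) : ZMod k) = -1 := by
    have h1 : ((k : ℕ) : ZMod k) = 0 := ZMod.natCast_self k
    have h2 : ((k - 1 : ℕ) : ZMod k) = (k : ZMod k) - 1 := by
      rw [Nat.cast_sub (by omega : 1 ≤ k)]; norm_num
    rw [h2, h1]; ring
  have hcor_eq : ∀ j : Fin d, corner k d j = RC.cor (0 : Fin d → ZMod k) j := by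
    intro j
    unfold corner RC.cor
    rw [hone]
    norm_num
  set J : Finset (Fin d) := Finset.univ.filter (fun j => corner k d j ∈ S) with hJ
  have hScor : ∀ s ∈ S, ∃ j ∈ J, s = corner k d j := by
    intro s hs
    obtain ⟨j, hj⟩ := hSsub s hs
    exact ⟨j, Finset.mem_filter.2 ⟨Finset.mem_univ j, hj ▸ hs⟩, hj⟩
  have hSJ : (↑S : Set (Fin d → ZMod k)) = RC.cors J (0 : Fin d → ZMod k) := by
    ext z
    constructor
    · intro hz
      obtain ⟨j, hjJ, hje⟩ := hScor z (Finset.mem_coe.1 hz)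
      exact ⟨j, hjJ, hje.trans (hcor_eq j)⟩
    · rintro ⟨t, ht, rfl⟩
      rw [← hcor_eq t]
      exact Finset.mem_coe.2 (Finset.mem_filter.1 ht).2
  have hmone : (-1 : ZMod k) ≠ 0 := by
    intro h
    apply RC.sub_one_ne (k := k) hk 0
    rw [zero_sub, h]
  have hinj : Function.Injective (fun j : Fin d => corner k d j) := by
    intro a b hab
    by_contra hne
    have h1 : corner k d a a = ((k - 1 : ℕ) : ZMod k) := Function.update_self _ _ _
    have h2 : corner k d b a = 0 := Function.update_of_ne hne _ _
    have h3 := congrFun hab a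
    simp only at h3
    rw [h1, h2, hone] at h3
    exact hmone h3
  have hcardJ : S.card = J.card := by
    have himg : J.image (fun j => corner k d j) = S := by
      ext s
      simp only [Finset.mem_image]
      constructor
      · rintro ⟨j, hj, rfl⟩
        exact (Finset.mem_filter.1 hj).2
      · intro hs
        obtain ⟨j, hjJ, hje⟩ := hScor s hs
        exact ⟨j, hjJ, hje.symm⟩
    rw [← himg, Finset.card_image_of_injective _ hinj]
  have hJcard : J.card % (k - 1) = 1 := by
    rw [← hcardJ, hmod, Nat.mod_eq_of_lt (by omega)]
  have hJne : J.Nonempty := by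
    refine Finset.card_pos.1 ?_
    rcases Nat.eq_zero_or_pos J.card with h | h
    · rw [h, Nat.zero_mod] at hJcard
      exact absurd hJcard.symm one_ne_zero
    · exact h
  have hJdvd : (k - 1) ∣ (J.card - 1) := by
    have h5 := Nat.div_add_mod J.card (k - 1)
    rw [hJcard] at h5
    exact ⟨J.card / (k - 1), (Nat.sub_eq_of_eq_add h5.symm)⟩
  have hcorbox : ∀ t ∈ J, RC.cor (0 : Fin d → ZMod k) t ∈ RC.box J (0 : Fin d → ZMod k) := by
    intro t ht l hl
    exact Function.update_of_ne (fun h => hl (by rw [h]; exact ht)) _ _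
  have hsplit : {z : Fin d → ZMod k | z ∉ S}
      = (RC.box Finset.univ (0 : Fin d → ZMod k) \ RC.box J 0)
        ∪ (RC.box J (0 : Fin d → ZMod k) \ RC.cors J 0) := by
    ext z
    simp only [Set.mem_setOf_eq, Set.mem_union, Set.mem_diff]
    constructor
    · intro hz
      by_cases hzJ : z ∈ RC.box J (0 : Fin d → ZMod k)
      · right
        refine ⟨hzJ, fun hc => hz ?_⟩
        rw [← hSJ] at hc
        exact Finset.mem_coe.1 hc
      · left
        exact ⟨fun l hl => absurd (Finset.mem_univ l) hl, hzJ⟩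
    · rintro (⟨_, hz2⟩ | ⟨hz1, hz2⟩) <;> intro hzS
      · apply hz2
        have hzc : z ∈ RC.cors J (0 : Fin d → ZMod k) := by
          rw [← hSJ]; exact Finset.mem_coe.2 hzS
        obtain ⟨t, ht, rfl⟩ := hzc
        exact hcorbox t ht
      · apply hz2
        rw [← hSJ]
        exact Finset.mem_coe.2 hzS
  rw [hsplit]
  refine RC.tilable_union
    (RC.tilable_boxdiff hT Finset.univ J (Finset.subset_univ J) 0)
    (RC.tilable_corners hT hk J hJne hJdvd 0) ?_
  refine Set.disjoint_left.2 (fun z hz hz' => ?_)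
  exact hz.2 hz'.1
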